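/- Let a > 0, b > 0, let k be a nonnegative integer, and set λ = a²/(4b). Then ∫_0^∞ x^k exp{−ax − bx²} dx = (−1)^k b^{−(k+1)/2} { Σ_{h=0}^{⌊k/2⌋} C(k,2h) λ^{k/2−h} Γ(h + 1/2) [ (1 − Φ(√(2λ))) e^{λ} + (1/2) Σ_{j=0}^{h−1} λ^{j+1/2}/Γ(j + 3/2) ] − (1/2) Σ_{h=0}^{⌊k/2⌋} h! C(k,2h+1) λ^{(k−1)/2−h} Σ_{j=0}^{h} λ^{j}/j! }, where C(k,m) denotes the binomial coefficient (taken to be 0 when m > k) and ⌊k/2⌋ is the greatest integer not exceeding k/2. -/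

import Mathlib

open MeasureTheory Set Finset Filter Real

lemma auxInt (n : ℕ) : Integrable (fun x : ℝ => x ^ n * Real.exp (-x ^ 2)) := by
  have := integrable_rpow_mul_exp_neg_mul_sq (b := 1) one_pos
    (s := (n : ℝ)) (lt_of_lt_of_le (by norm_num) (Nat.cast_nonneg n))
  simpa [Real.rpow_natCast] using this

lemma auxTend (n : ℕ) :
    Tendsto (fun x : ℝ => x ^ n * Real.exp (-x ^ 2)) atTop (nhds 0) := by
  apply squeeze_zero' (g := fun x : ℝ => x ^ n * Real.exp (-x))
  · filter_upwards [eventually_ge_atTop (0:ℝ)] with x hx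
    positivity
  · filter_upwards [eventually_ge_atTop (1:ℝ)] with x hx
    have h1 : x ≤ x ^ 2 := by nlinarith
    have : Real.exp (-x ^ 2) ≤ Real.exp (-x) := Real.exp_le_exp.2 (by linarith)
    have hx0 : (0:ℝ) ≤ x ^ n := by positivity
    nlinarith [this, hx0]
  · exact tendsto_pow_mul_exp_neg_atTop_nhds_zero n

lemma auxDeriv (n : ℕ) (u : ℝ) :
    HasDerivAt (fun u : ℝ => -(1/2) * u ^ (n+1) * Real.exp (-u ^ 2))
      (u ^ (n+2) * Real.exp (-u ^ 2) - ((n:ℝ)+1)/2 * (u ^ n * Real.exp (-u ^ 2))) u := by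
  have h1 : HasDerivAt (fun u : ℝ => u ^ (n+1)) (((n:ℝ)+1) * u ^ n) u := by
    simpa using hasDerivAt_pow (n+1) u
  have h2 : HasDerivAt (fun u : ℝ => Real.exp (-u ^ 2)) (Real.exp (-u ^ 2) * (-(2*u))) u := by
    have := ((hasDerivAt_pow 2 u).neg).exp
    simpa using this
  have := ((h1.const_mul (-(1/2 : ℝ))).mul h2)
  refine this.congr_deriv ?_
  ring

lemma auxJrec (c : ℝ) (n : ℕ) :
    ∫ u in Ioi c, u ^ (n+2) * Real.exp (-u ^ 2)
      = ((n:ℝ)+1)/2 * (∫ u in Ioi c, u ^ n * Real.exp (-u ^ 2))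
        + 1/2 * c ^ (n+1) * Real.exp (-c ^ 2) := by
  have hint : IntegrableOn
      (fun u : ℝ => u ^ (n+2) * Real.exp (-u ^ 2) - ((n:ℝ)+1)/2 * (u ^ n * Real.exp (-u ^ 2)))
      (Ioi c) :=
    ((auxInt (n+2)).sub ((auxInt n).const_mul _)).integrableOn
  have htend : Tendsto (fun u : ℝ => -(1/2) * u ^ (n+1) * Real.exp (-u ^ 2)) atTop (nhds 0) := by
    have := (auxTend (n+1)).const_mul (-(1/2 : ℝ))
    simpa [mul_assoc] using this
  have := integral_Ioi_of_hasDerivAt_of_tendsto' (fun x _ => auxDeriv n x) hint htend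
  rw [integral_sub ((auxInt (n+2)).integrableOn) (((auxInt n).const_mul _).integrableOn)] at this
  rw [MeasureTheory.integral_const_mul] at this
  have h2 := this
  linarith [h2]

lemma auxJ1 (c : ℝ) :
    ∫ u in Ioi c, u ^ 1 * Real.exp (-u ^ 2) = 1/2 * Real.exp (-c ^ 2) := by
  have hd : ∀ x ∈ Ici c, HasDerivAt (fun u : ℝ => -(1/2) * Real.exp (-u ^ 2))
      (x ^ 1 * Real.exp (-x ^ 2)) x := by
    intro x _
    have h2 : HasDerivAt (fun u : ℝ => Real.exp (-u ^ 2)) (Real.exp (-x ^ 2) * (-(2*x))) x := by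
      simpa using ((hasDerivAt_pow 2 x).neg).exp
    have := h2.const_mul (-(1/2 : ℝ))
    refine this.congr_deriv ?_
    ring
  have htend : Tendsto (fun u : ℝ => -(1/2) * Real.exp (-u ^ 2)) atTop (nhds 0) := by
    have := (auxTend 0).const_mul (-(1/2 : ℝ))
    simpa using this
  have := integral_Ioi_of_hasDerivAt_of_tendsto' hd ((auxInt 1).integrableOn) htend
  rw [this]; ring

lemma auxJ0 (c : ℝ) (Φ : ℝ → ℝ)
    (hΦ : ∀ x, Φ x = (1 / Real.sqrt (2 * Real.pi)) * ∫ v in Set.Iic x, Real.exp (-v ^ 2 / 2)) :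
    ∫ u in Ioi c, Real.exp (-u ^ 2) = Real.sqrt π * (1 - Φ (Real.sqrt 2 * c)) := by
  have hgauss : Integrable (fun v : ℝ => Real.exp (-v ^ 2 / 2)) := by
    have := integrable_exp_neg_mul_sq (b := 1/2) (by norm_num)
    simpa [neg_div, div_eq_mul_inv, mul_comm, neg_mul] using this
  have htot : (∫ v : ℝ, Real.exp (-v ^ 2 / 2)) = Real.sqrt (2 * π) := by
    have := integral_gaussian (1/2)
    rw [show (π / (1/2) : ℝ) = 2 * π by ring] at this
    rw [← this]
    congr 1; ext x; ring_nf
  have hsplit := intervalIntegral.integral_Iic_add_Ioi (μ := volume)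
    (hgauss.integrableOn (s := Iic (Real.sqrt 2 * c)))
    (hgauss.integrableOn (s := Ioi (Real.sqrt 2 * c)))
  rw [htot] at hsplit
  have hcv := integral_comp_mul_left_Ioi (fun v => Real.exp (-v ^ 2 / 2)) c
    (Real.sqrt_pos.2 (by norm_num : (0:ℝ) < 2))
  have hsq : ∀ u : ℝ, Real.exp (-(Real.sqrt 2 * u) ^ 2 / 2) = Real.exp (-u ^ 2) := by
    intro u
    rw [mul_pow, Real.sq_sqrt (by norm_num : (0:ℝ) ≤ 2)]
    ring_nf
  simp only [hsq, smul_eq_mul] at hcv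
  rw [hcv, hΦ]
  have h2pi : Real.sqrt (2 * π) = Real.sqrt 2 * Real.sqrt π :=
    Real.sqrt_mul (by norm_num) _
  have hs2 : Real.sqrt 2 ≠ 0 := by positivity
  have hspi : Real.sqrt π ≠ 0 := by positivity
  have hIoi : ∫ v in Ioi (Real.sqrt 2 * c), Real.exp (-v ^ 2 / 2)
      = Real.sqrt (2 * π) - ∫ v in Iic (Real.sqrt 2 * c), Real.exp (-v ^ 2 / 2) := by
    linarith [hsplit]
  rw [hIoi, h2pi]
  field_simp

lemma auxSqrtPow (lam : ℝ) (hl : 0 ≤ lam) (n : ℕ) :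
    (Real.sqrt lam) ^ n = lam ^ ((n:ℝ)/2) := by
  rw [Real.sqrt_eq_rpow, ← Real.rpow_natCast (lam ^ ((1:ℝ)/2)) n, ← Real.rpow_mul hl]
  congr 1
  ring

lemma auxGammaPos (h : ℕ) : 0 < Real.Gamma ((h:ℝ) + 1/2) :=
  Real.Gamma_pos_of_pos (by positivity)

lemma auxGammaSucc (h : ℕ) :
    Real.Gamma ((h:ℝ) + 1 + 1/2) = ((h:ℝ) + 1/2) * Real.Gamma ((h:ℝ) + 1/2) := by
  have := Real.Gamma_add_one (s := (h:ℝ) + 1/2) (by positivity)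
  rw [show (h:ℝ) + 1 + 1/2 = (h:ℝ) + 1/2 + 1 by ring, this]

lemma auxJodd (c : ℝ) (h : ℕ) :
    ∫ u in Ioi c, u ^ (2*h+1) * Real.exp (-u ^ 2)
      = 1/2 * (Nat.factorial h : ℝ) * Real.exp (-c ^ 2)
        * ∑ j ∈ Finset.range (h+1), (c ^ 2) ^ j / (Nat.factorial j : ℝ) := by
  induction h with
  | zero => simpa using auxJ1 c
  | succ h ih =>
    have hrec := auxJrec c (2*h+1)
    rw [show 2*h+1+2 = 2*(h+1)+1 by ring] at hrec
    rw [hrec, ih, Finset.sum_range_succ (n := h+1)]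
    have hfact : (Nat.factorial (h+1) : ℝ) = ((h:ℝ)+1) * (Nat.factorial h : ℝ) := by
      push_cast [Nat.factorial_succ]; ring
    have hpow : c ^ (2*h+1+1) = (c ^ 2) ^ (h+1) := by
      rw [← pow_mul]; ring_nf
    have hfne : (Nat.factorial (h+1) : ℝ) ≠ 0 := by positivity
    rw [hpow, hfact]
    push_cast
    field_simp
    ring

lemma auxPowHalf (c : ℝ) (hc : 0 ≤ c) (h : ℕ) :
    (c ^ 2 : ℝ) ^ ((h:ℝ) + 1/2) = c ^ (2*h+1) := by
  rw [← Real.rpow_natCast c 2, ← Real.rpow_mul hc, ← Real.rpow_natCast c (2*h+1)]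
  congr 1
  push_cast
  ring

lemma auxJeven (c : ℝ) (hc : 0 ≤ c) (Φ : ℝ → ℝ)
    (hΦ : ∀ x, Φ x = (1 / Real.sqrt (2 * Real.pi)) * ∫ v in Set.Iic x, Real.exp (-v ^ 2 / 2))
    (h : ℕ) :
    ∫ u in Ioi c, u ^ (2*h) * Real.exp (-u ^ 2)
      = Real.Gamma ((h:ℝ) + 1/2) * Real.exp (-c ^ 2)
        * ((1 - Φ (Real.sqrt 2 * c)) * Real.exp (c ^ 2)
          + 1/2 * ∑ j ∈ Finset.range h, (c ^ 2) ^ ((j:ℝ)+1/2) / Real.Gamma ((j:ℝ) + 3/2)) := by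
  induction h with
  | zero =>
    have h0 := auxJ0 c Φ hΦ
    have hee : Real.exp (-c ^ 2) * Real.exp (c ^ 2) = 1 := by
      rw [← Real.exp_add]; simp
    simp only [Nat.cast_zero, zero_add, Real.Gamma_one_half_eq, mul_zero, Finset.range_zero,
      Finset.sum_empty, add_zero, pow_zero, one_mul]
    rw [h0]
    linear_combination (-(Real.sqrt π * (1 - Φ (Real.sqrt 2 * c)))) * hee
  | succ h ih =>
    have hrec := auxJrec c (2*h)
    rw [show 2*h+2 = 2*(h+1) by ring] at hrec
    rw [hrec, ih, Finset.sum_range_succ, auxPowHalf c hc h]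
    have hg := (auxGammaPos h).ne'
    have hh : ((h:ℝ) + 1/2) ≠ 0 := by positivity
    push_cast
    rw [show ((h:ℝ) + 3/2) = (h:ℝ) + 1 + 1/2 by ring, auxGammaSucc]
    set S := ∑ j ∈ Finset.range h, (c ^ 2) ^ ((j:ℝ)+1/2) / Real.Gamma ((j:ℝ) + 3/2) with hS
    field_simp
    ring

lemma auxSplit (g : ℕ → ℝ) (n : ℕ) :
    ∑ m ∈ Finset.range (2*n), g m
      = ∑ h ∈ Finset.range n, g (2*h) + ∑ h ∈ Finset.range n, g (2*h+1) := by
  induction n with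
  | zero => simp
  | succ n ih =>
    rw [show 2*(n+1) = 2*n+1+1 by ring, Finset.sum_range_succ, Finset.sum_range_succ,
      Finset.sum_range_succ (fun h => g (2*h)), Finset.sum_range_succ (fun h => g (2*h+1)), ih]
    ring

lemma auxCompAddRight (f : ℝ → ℝ) (a c : ℝ) :
    ∫ x in Ioi a, f (x + c) = ∫ x in Ioi (a + c), f x := by
  rw [← integral_indicator measurableSet_Ioi, ← integral_indicator measurableSet_Ioi]
  rw [← MeasureTheory.integral_add_right_eq_self (fun x => (Ioi (a+c)).indicator f x) c]
  congr 1
  ext x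
  have hiff : x + c ∈ Ioi (a+c) ↔ x ∈ Ioi a := by
    simp only [Set.mem_Ioi]
    constructor <;> intro <;> linarith
  by_cases hx : x ∈ Ioi a
  · rw [Set.indicator_of_mem hx, Set.indicator_of_mem (hiff.2 hx)]
  · rw [Set.indicator_of_notMem hx, Set.indicator_of_notMem (fun h => hx (hiff.1 h))]

theorem integral_pow_mul_exp_neg_linear_quadratic
    (a b : ℝ) (ha : 0 < a) (hb : 0 < b) (k : ℕ)
    (lam : ℝ) (hlam : lam = a ^ 2 / (4 * b))
    (Φ : ℝ → ℝ)
    (hΦ : ∀ x, Φ x = (1 / Real.sqrt (2 * Real.pi)) * ∫ v in Set.Iic x, Real.exp (-v ^ 2 / 2)) :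
    ∫ x in Set.Ioi (0 : ℝ), x ^ k * Real.exp (-(a * x) - b * x ^ 2)
      = (-1 : ℝ) ^ k * b ^ (-(((k : ℝ) + 1) / 2)) *
        ((∑ h ∈ Finset.range (k / 2 + 1),
            (Nat.choose k (2 * h) : ℝ) * lam ^ ((k : ℝ) / 2 - (h : ℝ))
              * Real.Gamma ((h : ℝ) + 1 / 2) *
              ((1 - Φ (Real.sqrt (2 * lam))) * Real.exp lam
                + (1 / 2) * ∑ j ∈ Finset.range h,
                    lam ^ ((j : ℝ) + 1 / 2) / Real.Gamma ((j : ℝ) + 3 / 2)))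
          - (1 / 2) * ∑ h ∈ Finset.range (k / 2 + 1),
              (Nat.factorial h : ℝ) * (Nat.choose k (2 * h + 1) : ℝ)
                * lam ^ (((k : ℝ) - 1) / 2 - (h : ℝ)) *
                ∑ j ∈ Finset.range (h + 1), lam ^ j / (Nat.factorial j : ℝ)) := by
  have hlam0 : 0 < lam := by rw [hlam]; positivity
  set s : ℝ := Real.sqrt b with hs_def
  have hs : 0 < s := Real.sqrt_pos.2 hb
  have hs2 : s ^ 2 = b := Real.sq_sqrt hb.le
  set c : ℝ := Real.sqrt lam with hc_def
  have hc : 0 < c := Real.sqrt_pos.2 hlam0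
  have hc2 : c ^ 2 = lam := Real.sq_sqrt hlam0.le
  have hac : a = 2 * s * c := by
    have h1 : lam = (a / (2*s)) ^ 2 := by
      rw [hlam, ← hs2]; field_simp; ring
    have h2 : c = a / (2*s) := by
      rw [hc_def, h1, Real.sqrt_sq (by positivity)]
    rw [h2]; field_simp
  -- the substituted function
  set g : ℝ → ℝ := fun u => ((u - c) * s⁻¹) ^ k * Real.exp (-u ^ 2) with hg_def
  have hgx : ∀ x : ℝ, x ^ k * Real.exp (-(a * x) - b * x ^ 2) = Real.exp lam * g (s * x + c) := by
    intro x
    rw [hg_def]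
    simp only
    rw [show s * x + c - c = s * x by ring, show s * x * s⁻¹ = x by field_simp]
    rw [mul_comm (Real.exp lam), mul_assoc, ← Real.exp_add]
    congr 2
    rw [← hc2, ← hs2, hac]
    ring
  -- step 1 : change of variables
  have step1 : ∫ x in Set.Ioi (0:ℝ), x ^ k * Real.exp (-(a * x) - b * x ^ 2)
      = Real.exp lam * (s⁻¹ * ∫ u in Ioi c, g u) := by
    simp_rw [hgx]
    rw [MeasureTheory.integral_const_mul]
    congr 1
    have h1 : ∫ x in Ioi (0:ℝ), g (s * x + c) = s⁻¹ • ∫ y in Ioi (s * 0), (fun y => g (y + c)) y :=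
      integral_comp_mul_left_Ioi (fun y => g (y + c)) 0 hs
    rw [h1, mul_zero, auxCompAddRight g 0 c, zero_add, smul_eq_mul]
  -- step 2 : binomial expansion
  set coef : ℕ → ℝ := fun m => (-1:ℝ) ^ (m + k) * c ^ (k - m) * (Nat.choose k m : ℝ) * (s⁻¹) ^ k
    with hcoef_def
  have hgu : ∀ u : ℝ, g u = ∑ m ∈ Finset.range (k+1), coef m * (u ^ m * Real.exp (-u ^ 2)) := by
    intro u
    rw [hg_def]
    simp only
    rw [mul_pow, sub_pow, Finset.sum_mul, Finset.sum_mul]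
    refine Finset.sum_congr rfl fun m _ => ?_
    rw [hcoef_def]
    ring
  have step2 : ∫ u in Ioi c, g u
      = ∑ m ∈ Finset.range (k+1), coef m * ∫ u in Ioi c, u ^ m * Real.exp (-u ^ 2) := by
    simp_rw [hgu]
    rw [MeasureTheory.integral_finset_sum _
      (fun m _ => ((auxInt m).const_mul (coef m)).integrableOn)]
    exact Finset.sum_congr rfl fun m _ => MeasureTheory.integral_const_mul _ _
  -- step 3 : extend the sum and split into even and odd parts
  set T : ℕ → ℝ := fun m => coef m * ∫ u in Ioi c, u ^ m * Real.exp (-u ^ 2) with hT_def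
  have hext : ∑ m ∈ Finset.range (k+1), T m = ∑ m ∈ Finset.range (2*(k/2+1)), T m := by
    refine Finset.sum_subset (Finset.range_subset_range.2 (by omega)) fun m _ hm => ?_
    have hkm : k < m := by
      have := Finset.mem_range.not.mp hm
      omega
    simp [hT_def, hcoef_def, Nat.choose_eq_zero_of_lt hkm]
  have hsplit := auxSplit T (k/2+1)
  -- power of b
  have h1 : s⁻¹ = b ^ (-(1/2) : ℝ) := by
    rw [Real.rpow_neg hb.le, hs_def, Real.sqrt_eq_rpow]
  have h2 : (s⁻¹) ^ k = b ^ (-((k:ℝ)/2)) := by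
    rw [h1, ← Real.rpow_natCast (b ^ ((-(1/2)) : ℝ)) k, ← Real.rpow_mul hb.le]
    congr 1
    push_cast
    ring
  have hbpow : b ^ (-(((k:ℝ)+1)/2)) = s⁻¹ * (s⁻¹) ^ k := by
    rw [show (-(((k:ℝ)+1)/2)) = (-(1/2)) + (-((k:ℝ)/2)) by ring, Real.rpow_add hb, ← h1, ← h2]
  have hsq2 : Real.sqrt (2 * lam) = Real.sqrt 2 * c := by
    rw [Real.sqrt_mul (by norm_num : (0:ℝ) ≤ 2) lam, ← hc_def]
  have hexp : Real.exp (-lam) = (Real.exp lam)⁻¹ := Real.exp_neg lam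
  -- per-index identities
  have heven : ∀ h ∈ Finset.range (k/2+1), Real.exp lam * T (2*h)
      = (-1:ℝ) ^ k * (s⁻¹) ^ k *
        ((Nat.choose k (2*h) : ℝ) * lam ^ ((k:ℝ)/2 - (h:ℝ)) * Real.Gamma ((h:ℝ) + 1/2) *
          ((1 - Φ (Real.sqrt (2 * lam))) * Real.exp lam
            + (1/2) * ∑ j ∈ Finset.range h, lam ^ ((j:ℝ) + 1/2) / Real.Gamma ((j:ℝ) + 3/2))) := by
    intro h hh
    have h2h : 2*h ≤ k := by have := Finset.mem_range.mp hh; omega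
    have hsign : ((-1:ℝ)) ^ (2*h+k) = (-1) ^ k := by
      rw [pow_add, pow_mul]; norm_num
    have hcp : c ^ (k - 2*h) = lam ^ ((k:ℝ)/2 - (h:ℝ)) := by
      rw [hc_def, auxSqrtPow lam hlam0.le]
      congr 1
      rw [Nat.cast_sub h2h]
      push_cast
      ring
    simp only [hT_def, hcoef_def]
    rw [auxJeven c hc.le Φ hΦ h, hc2, hsq2, hsign, hcp, hexp]
    field_simp
  have hodd : ∀ h ∈ Finset.range (k/2+1), Real.exp lam * T (2*h+1)
      = ((-1:ℝ) ^ k * (s⁻¹) ^ k * (-(1/2))) *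
        ((Nat.factorial h : ℝ) * (Nat.choose k (2*h+1) : ℝ) * lam ^ (((k:ℝ)-1)/2 - (h:ℝ)) *
          ∑ j ∈ Finset.range (h+1), lam ^ j / (Nat.factorial j : ℝ)) := by
    intro h hh
    by_cases hle : 2*h+1 ≤ k
    · have hsign : ((-1:ℝ)) ^ (2*h+1+k) = -(-1) ^ k := by
        rw [show 2*h+1+k = 2*h + (k+1) by ring, pow_add, pow_mul]
        norm_num [pow_succ]
      have hcp : c ^ (k - (2*h+1)) = lam ^ (((k:ℝ)-1)/2 - (h:ℝ)) := by
        rw [hc_def, auxSqrtPow lam hlam0.le]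
        congr 1
        rw [Nat.cast_sub hle]
        push_cast
        ring
      simp only [hT_def, hcoef_def]
      rw [auxJodd c h, hc2, hsign, hcp, hexp]
      have hEE : Real.exp lam * (Real.exp lam)⁻¹ = 1 := mul_inv_cancel₀ (Real.exp_pos lam).ne'
      linear_combination (-(1/2) * (-1:ℝ) ^ k * (s⁻¹) ^ k * lam ^ (((k:ℝ)-1)/2 - (h:ℝ)) * (Nat.choose k (2*h+1) : ℝ) * (Nat.factorial h : ℝ) * ∑ j ∈ Finset.range (h+1), lam ^ j / (Nat.factorial j : ℝ)) * hEE
    · have h0 : Nat.choose k (2*h+1) = 0 := Nat.choose_eq_zero_of_lt (by omega)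
      simp [hT_def, hcoef_def, h0]
  have hA : Real.exp lam * ∑ h ∈ Finset.range (k/2+1), T (2*h)
      = (-1:ℝ) ^ k * (s⁻¹) ^ k *
        ∑ h ∈ Finset.range (k/2+1),
          ((Nat.choose k (2*h) : ℝ) * lam ^ ((k:ℝ)/2 - (h:ℝ)) * Real.Gamma ((h:ℝ) + 1/2) *
            ((1 - Φ (Real.sqrt (2 * lam))) * Real.exp lam
              + (1/2) * ∑ j ∈ Finset.range h, lam ^ ((j:ℝ) + 1/2) / Real.Gamma ((j:ℝ) + 3/2))) := by
    rw [Finset.mul_sum, Finset.sum_congr rfl heven, ← Finset.mul_sum]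
  have hB : Real.exp lam * ∑ h ∈ Finset.range (k/2+1), T (2*h+1)
      = ((-1:ℝ) ^ k * (s⁻¹) ^ k * (-(1/2))) *
        ∑ h ∈ Finset.range (k/2+1),
          ((Nat.factorial h : ℝ) * (Nat.choose k (2*h+1) : ℝ) * lam ^ (((k:ℝ)-1)/2 - (h:ℝ)) *
            ∑ j ∈ Finset.range (h+1), lam ^ j / (Nat.factorial j : ℝ)) := by
    rw [Finset.mul_sum, Finset.sum_congr rfl hodd, ← Finset.mul_sum]
  rw [step1, step2, hext, hsplit, hbpow]
  linear_combination s⁻¹ * hA + s⁻¹ * hB
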